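/- Under conditions (i) m₁ ≤ n and (ii) at most n − m₁ of the gⱼ vanish at any feasible point, if the minimum f_min of min{f(x) : h(x)=0, g(x)≥0} is attained at a point x*, then x* belongs to W = Θ ∪ K_x; consequently the infimum f* of f over the Jacobian-augmented feasible set (adding the equations defining W) equals f_min. -/

import Mathlib

open MvPolynomial

noncomputable def pgrad {n : ℕ} (p : MvPolynomial (Fin n) ℝ) (x₀ : Fin n → ℝ) :
    (Fin n → ℝ) →L[ℝ] ℝ :=
  ∑ k, eval x₀ (pderiv k p) • (ContinuousLinearMap.proj k : (Fin n → ℝ) →L[ℝ] ℝ)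

lemma pgrad_apply {n : ℕ} (p : MvPolynomial (Fin n) ℝ) (x₀ v : Fin n → ℝ) :
    pgrad p x₀ v = ∑ k, eval x₀ (pderiv k p) * v k := by
  simp [pgrad, ContinuousLinearMap.sum_apply, smul_eq_mul]

lemma pgrad_single {n : ℕ} (p : MvPolynomial (Fin n) ℝ) (x₀ : Fin n → ℝ) (k : Fin n) :
    pgrad p x₀ (Pi.single k 1) = eval x₀ (pderiv k p) := by
  simp [pgrad_apply, Pi.single_apply, mul_ite]

lemma hasStrictFDerivAt_eval {n : ℕ} (p : MvPolynomial (Fin n) ℝ) (x₀ : Fin n → ℝ) :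
    HasStrictFDerivAt (fun x => eval x p) (pgrad p x₀) x₀ := by
  induction p using MvPolynomial.induction_on with
  | C a =>
      have hz : pgrad (C a : MvPolynomial (Fin n) ℝ) x₀ = 0 := by
        ext v; simp [pgrad_apply, pderiv_C]
      simp only [eval_C, hz]
      exact hasStrictFDerivAt_const a x₀
  | add p q hp hq =>
      have hz : pgrad (p + q) x₀ = pgrad p x₀ + pgrad q x₀ := by
        ext v; simp [pgrad_apply, add_mul, Finset.sum_add_distrib]
      simp only [eval_add, hz]
      exact hp.add hq
  | mul_X p i hp =>
      have hx : HasStrictFDerivAt (fun x : Fin n → ℝ => x i)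
          (ContinuousLinearMap.proj i : (Fin n → ℝ) →L[ℝ] ℝ) x₀ :=
        (ContinuousLinearMap.proj i : (Fin n → ℝ) →L[ℝ] ℝ).hasStrictFDerivAt
      have := hp.mul hx
      have hz : pgrad (p * X i) x₀ =
          eval x₀ p • (ContinuousLinearMap.proj i : (Fin n → ℝ) →L[ℝ] ℝ)
            + x₀ i • pgrad p x₀ := by
        ext v
        simp only [pgrad_apply, pderiv_mul, eval_add, eval_mul, eval_X,
          ContinuousLinearMap.add_apply, ContinuousLinearMap.smul_apply,
          ContinuousLinearMap.proj_apply, smul_eq_mul, pderiv_X, Pi.single_apply]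
        simp only [apply_ite (eval x₀), map_one, map_zero, add_mul, mul_ite, mul_one,
          mul_zero, ite_mul, zero_mul]
        rw [Finset.sum_add_distrib, Finset.sum_ite_eq, Finset.mul_sum]
        simp only [Finset.mem_univ, if_true]
        rw [add_comm]
        congr 1
        exact Finset.sum_congr rfl fun k _ => by ring
      simp only [eval_mul, eval_X, hz]
      exact this

lemma aeval_coe {n : ℕ} (x : Fin n → ℝ) (p : MvPolynomial (Fin n) ℝ) :
    aeval (fun i => (x i : ℂ)) p = ((eval x p : ℝ) : ℂ) := by
  induction p using MvPolynomial.induction_on with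
  | C a => simp
  | add p q hp hq => simp [hp, hq]
  | mul_X p i hp => simp [hp]

lemma rank_lt_of_mulVec_eq_zero {m k : Type*} [Fintype m] [Fintype k] [DecidableEq k]
    (M : Matrix m k ℂ) (v : k → ℂ) (hv : v ≠ 0) (hMv : M.mulVec v = 0) :
    M.rank < Fintype.card k := by
  have h1 := LinearMap.finrank_range_add_finrank_ker M.mulVecLin
  have hvmem : v ∈ LinearMap.ker M.mulVecLin := by
    simpa [Matrix.mulVecLin_apply] using hMv
  have hker : 0 < Module.finrank ℂ (LinearMap.ker M.mulVecLin) := by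
    rw [Module.finrank_pos_iff]
    exact nontrivial_of_ne ⟨v, hvmem⟩ 0 (fun hEq => hv (by simpa using congrArg Subtype.val hEq))
  have h2 : Module.finrank ℂ (k → ℂ) = Fintype.card k := Module.finrank_pi ℂ
  rw [Matrix.rank]
  omega

set_option maxHeartbeats 2000000 in
/-- under (i) `m₁ ≤ n` and (ii) at most `n − m₁` of the `gⱼ`
vanish at any feasible point, if `f_min` is attained at `x*`, then `x*` belongs
to `W = Θ ∪ K_x`, and consequently the infimum `f*` of `f` over the
Jacobian-augmented feasible set equals `f_min`. -/
theorem minimizer_in_W_and_augmented_inf_eq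
    (n m₁ m₂ : ℕ)
    (f : MvPolynomial (Fin n) ℝ)
    (h : Fin m₁ → MvPolynomial (Fin n) ℝ) (g : Fin m₂ → MvPolynomial (Fin n) ℝ)
    (hm : m₁ ≤ n)
    (hfeas : ∀ u : Fin n → ℝ,
      ((∀ i, eval u (h i) = 0) ∧ ∀ j, 0 ≤ eval u (g j)) →
        Nat.card {j : Fin m₂ // eval u (g j) = 0} ≤ n - m₁)
    (len : Finset (Fin m₂) → ℕ)
    (η : (J : Finset (Fin m₂)) → Fin (len J) → MvPolynomial (Fin n) ℝ)
    (hη : ∀ J : Finset (Fin m₂), J.card ≤ min (m₁ + m₂) (n - 1) - m₁ →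
      {x : Fin n → ℂ | ∀ i, aeval x (η J i) = 0} =
        {x : Fin n → ℂ |
          Matrix.rank (Matrix.of fun (k : Fin n) (c : Unit ⊕ Fin m₁ ⊕ {j // j ∈ J}) =>
            Sum.elim (fun _ => aeval x (pderiv k f))
              (Sum.elim (fun i => aeval x (pderiv k (h i)))
                (fun j => aeval x (pderiv k (g j.1)))) c) ≤ m₁ + J.card})
    (xstar : Fin n → ℝ)
    (hxstarfeas : (∀ i, eval xstar (h i) = 0) ∧ ∀ j, 0 ≤ eval xstar (g j))
    (hxstarmin : ∀ y : Fin n → ℝ,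
      ((∀ i, eval y (h i) = 0) ∧ ∀ j, 0 ≤ eval y (g j)) →
        eval xstar f ≤ eval y f) :
    (fun i => (xstar i : ℂ)) ∈
      ({x : Fin n → ℂ | ∃ J : Finset (Fin m₂), J.card ≤ n - m₁ ∧
          (∀ i, aeval x (h i) = 0) ∧ (∀ j ∈ J, aeval x (g j) = 0) ∧
          Matrix.rank (Matrix.of fun (k : Fin n) (c : Fin m₁ ⊕ {j // j ∈ J}) =>
            Sum.elim (fun i => aeval x (pderiv k (h i)))
              (fun j => aeval x (pderiv k (g j.1))) c) < m₁ + J.card} ∪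
        {x : Fin n → ℂ | ∃ (lam : Fin m₁ → ℂ) (mu : Fin m₂ → ℂ),
          (∀ k : Fin n, aeval x (pderiv k f) =
            (∑ i, lam i * aeval x (pderiv k (h i))) +
              ∑ j, mu j * aeval x (pderiv k (g j))) ∧
          (∀ i, aeval x (h i) = 0) ∧ ∀ j, mu j * aeval x (g j) = 0}) ∧
    IsLeast {v : ℝ | ∃ x : Fin n → ℝ,
        ((∀ i, eval x (h i) = 0) ∧
          (∀ J : Finset (Fin m₂), J.card ≤ min (m₁ + m₂) (n - 1) - m₁ →
            ∀ i, eval x (η J i) * ∏ j ∈ Jᶜ, eval x (g j) = 0) ∧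
          ∀ ν : Finset (Fin m₂), 0 ≤ ∏ j ∈ ν, eval x (g j)) ∧
        v = eval x f}
      (eval xstar f) := by
  classical
  set J₀ : Finset (Fin m₂) := Finset.univ.filter (fun j => eval xstar (g j) = 0) with hJ₀def
  have hJ₀mem : ∀ j, j ∈ J₀ ↔ eval xstar (g j) = 0 := by
    intro j; simp [hJ₀def]
  have hJ₀card : J₀.card ≤ n - m₁ := by
    have := hfeas xstar hxstarfeas
    rwa [Nat.card_eq_fintype_card, Fintype.card_subtype] at this
  -- the finite family of active constraints
  set P : (Fin m₁ ⊕ {j // j ∈ J₀}) → MvPolynomial (Fin n) ℝ :=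
    Sum.elim h (fun j => g j.1) with hPdef
  -- local extremum on the level set of active constraints
  have hopen : ∀ᶠ y in nhds xstar, ∀ j, j ∉ J₀ → 0 < eval y (g j) := by
    rw [Filter.eventually_all]
    intro j
    by_cases hj : j ∈ J₀
    · exact Filter.Eventually.of_forall fun y hy => absurd hj hy
    · have hne : eval xstar (g j) ≠ 0 := fun h0 => hj ((hJ₀mem j).mpr h0)
      have hpos : 0 < eval xstar (g j) := lt_of_le_of_ne (hxstarfeas.2 j) (Ne.symm hne)
      have hc : ContinuousAt (fun y => eval y (g j)) xstar :=
        (hasStrictFDerivAt_eval (g j) xstar).continuousAt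
      exact (hc.eventually (eventually_gt_nhds hpos)).mono fun y hy _ => hy
  have hextr : IsLocalExtrOn (fun x => eval x f)
      {x : Fin n → ℝ | ∀ i, (fun i x => eval x (P i)) i x = (fun i x => eval x (P i)) i xstar}
      xstar := by
    refine Or.inl ?_
    have h1 : ∀ᶠ y in nhdsWithin xstar
        {x : Fin n → ℝ | ∀ i, (fun i x => eval x (P i)) i x = (fun i x => eval x (P i)) i xstar},
        y ∈ {x : Fin n → ℝ | ∀ i, (fun i x => eval x (P i)) i x
          = (fun i x => eval x (P i)) i xstar} := eventually_mem_nhdsWithin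
    have h2 : ∀ᶠ y in nhdsWithin xstar
        {x : Fin n → ℝ | ∀ i, (fun i x => eval x (P i)) i x
          = (fun i x => eval x (P i)) i xstar},
        ∀ j ∉ J₀, 0 < eval y (g j) := hopen.filter_mono nhdsWithin_le_nhds
    filter_upwards [h1, h2] with y hy hypos
    refine hxstarmin y ⟨fun i => ?_, fun j => ?_⟩
    · have := hy (Sum.inl i)
      simp only [hPdef, Sum.elim_inl] at this
      rw [this, hxstarfeas.1 i]
    · by_cases hj : j ∈ J₀
      · have := hy (Sum.inr ⟨j, hj⟩)
        simp only [hPdef, Sum.elim_inr] at this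
        rw [this, (hJ₀mem j).mp hj]
      · exact le_of_lt (hypos j hj)
  obtain ⟨Λ, Λ₀, hΛne, hsum⟩ :=
    hextr.exists_multipliers_of_hasStrictFDerivAt
      (f' := fun i => pgrad (P i) xstar)
      (fun i => hasStrictFDerivAt_eval (P i) xstar)
      (hasStrictFDerivAt_eval f xstar)
  have key : ∀ k : Fin n,
      (∑ i : Fin m₁, Λ (Sum.inl i) * eval xstar (pderiv k (h i)))
        + (∑ j : {j // j ∈ J₀}, Λ (Sum.inr j) * eval xstar (pderiv k (g j.1)))
        + Λ₀ * eval xstar (pderiv k f) = 0 := by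
    intro k
    have := congrFun (congrArg (DFunLike.coe) hsum) (Pi.single k 1)
    simp only [ContinuousLinearMap.add_apply, ContinuousLinearMap.coe_sum',
      Finset.sum_apply, ContinuousLinearMap.smul_apply, pgrad_single, smul_eq_mul,
      ContinuousLinearMap.zero_apply, Fintype.sum_sum_type, hPdef, Sum.elim_inl,
      Sum.elim_inr] at this
    linarith [this]
  constructor
  · by_cases hΛ0 : Λ₀ = 0
    · -- Θ case
      left
      refine ⟨J₀, hJ₀card, fun i => ?_, fun j hj => ?_, ?_⟩
      · rw [aeval_coe, hxstarfeas.1 i, Complex.ofReal_zero]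
      · rw [aeval_coe, (hJ₀mem j).mp hj, Complex.ofReal_zero]
      · have hΛnz : Λ ≠ 0 := by
          intro h0
          exact hΛne (by rw [Prod.mk_eq_zero]; exact ⟨h0, hΛ0⟩)
        have hvne : (fun i => (Λ i : ℂ)) ≠ (0 : (Fin m₁ ⊕ {j // j ∈ J₀}) → ℂ) := by
          intro h0
          apply hΛnz
          funext i
          have := congrFun h0 i
          rw [Pi.zero_apply] at this
          exact_mod_cast this
        have hMv : (Matrix.of fun (k : Fin n) (c : Fin m₁ ⊕ {j // j ∈ J₀}) =>
            Sum.elim (fun i => aeval (fun i => (xstar i : ℂ)) (pderiv k (h i)))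
              (fun j => aeval (fun i => (xstar i : ℂ)) (pderiv k (g j.1))) c).mulVec
            (fun i => (Λ i : ℂ)) = 0 := by
          funext k
          have hk := key k
          rw [hΛ0, zero_mul, add_zero] at hk
          simp only [Matrix.mulVec, dotProduct, Matrix.of_apply,
            Fintype.sum_sum_type, Sum.elim_inl, Sum.elim_inr, aeval_coe, Pi.zero_apply]
          have hk' : (∑ x : Fin m₁, eval xstar (pderiv k (h x)) * Λ (Sum.inl x))
              + ∑ x : {j // j ∈ J₀}, eval xstar (pderiv k (g x.1)) * Λ (Sum.inr x) = 0 := by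
            rw [show (∑ x : Fin m₁, eval xstar (pderiv k (h x)) * Λ (Sum.inl x))
                = ∑ i : Fin m₁, Λ (Sum.inl i) * eval xstar (pderiv k (h i)) from
              Finset.sum_congr rfl fun _ _ => mul_comm _ _,
              show (∑ x : {j // j ∈ J₀}, eval xstar (pderiv k (g x.1)) * Λ (Sum.inr x))
                = ∑ j : {j // j ∈ J₀}, Λ (Sum.inr j) * eval xstar (pderiv k (g j.1)) from
              Finset.sum_congr rfl fun _ _ => mul_comm _ _]
            exact hk
          exact_mod_cast hk'
        have hlt := rank_lt_of_mulVec_eq_zero _ _ hvne hMv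
        have hcard : Fintype.card (Fin m₁ ⊕ {j // j ∈ J₀}) = m₁ + J₀.card := by
          simp [Fintype.card_coe]
        omega
    · -- KKT case
      right
      set lamR : Fin m₁ → ℝ := fun i => -(Λ (Sum.inl i)) / Λ₀ with hlamR
      set muR : Fin m₂ → ℝ := fun j =>
        if hj : j ∈ J₀ then -(Λ (Sum.inr ⟨j, hj⟩)) / Λ₀ else 0 with hmuR
      have keyR : ∀ k : Fin n, eval xstar (pderiv k f) =
          (∑ i, lamR i * eval xstar (pderiv k (h i)))
            + ∑ j, muR j * eval xstar (pderiv k (g j)) := by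
        intro k
        have hmusum : ∑ j, muR j * eval xstar (pderiv k (g j))
            = ∑ j : {j // j ∈ J₀}, (-(Λ (Sum.inr j)) / Λ₀) * eval xstar (pderiv k (g j.1)) := by
          calc ∑ j, muR j * eval xstar (pderiv k (g j))
              = ∑ j ∈ J₀, muR j * eval xstar (pderiv k (g j)) :=
                (Finset.sum_subset (Finset.subset_univ J₀)
                  (fun x _ hx => by simp only [hmuR]; rw [dif_neg hx, zero_mul])).symm
            _ = ∑ j : {j // j ∈ J₀}, muR j.1 * eval xstar (pderiv k (g j.1)) :=
                (Finset.sum_coe_sort J₀ (fun j => muR j * eval xstar (pderiv k (g j)))).symm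
            _ = ∑ j : {j // j ∈ J₀}, (-(Λ (Sum.inr j)) / Λ₀) * eval xstar (pderiv k (g j.1)) :=
                Finset.sum_congr rfl fun j _ => by simp only [hmuR]; rw [dif_pos j.2]
        rw [hmusum]
        have hk := key k
        rw [show (∑ i, lamR i * eval xstar (pderiv k (h i)))
            = (-1/Λ₀) * ∑ i : Fin m₁, Λ (Sum.inl i) * eval xstar (pderiv k (h i)) from by
          rw [Finset.mul_sum]
          exact Finset.sum_congr rfl fun i _ => by simp only [hlamR]; ring,
          show (∑ j : {j // j ∈ J₀}, (-(Λ (Sum.inr j)) / Λ₀) * eval xstar (pderiv k (g j.1)))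
            = (-1/Λ₀) * ∑ j : {j // j ∈ J₀}, Λ (Sum.inr j) * eval xstar (pderiv k (g j.1)) from by
          rw [Finset.mul_sum]
          exact Finset.sum_congr rfl fun j _ => by ring]
        rw [← mul_add]
        have hAB : (∑ i : Fin m₁, Λ (Sum.inl i) * eval xstar (pderiv k (h i)))
            + (∑ j : {j // j ∈ J₀}, Λ (Sum.inr j) * eval xstar (pderiv k (g j.1)))
            = -(Λ₀ * eval xstar (pderiv k f)) := by linarith
        rw [hAB]
        field_simp
      refine ⟨fun i => (lamR i : ℂ), fun j => (muR j : ℂ), fun k => ?_, fun i => ?_, fun j => ?_⟩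
      · have := keyR k
        simp only [aeval_coe]
        push_cast
        exact_mod_cast congrArg (fun t : ℝ => (t : ℂ)) this
      · rw [aeval_coe, hxstarfeas.1 i, Complex.ofReal_zero]
      · by_cases hj : j ∈ J₀
        · rw [aeval_coe, (hJ₀mem j).mp hj, Complex.ofReal_zero, mul_zero]
        · have h0 : muR j = 0 := by simp only [hmuR]; exact dif_neg hj
          simp only [h0, Complex.ofReal_zero, zero_mul]
  · constructor
    · refine ⟨xstar, ⟨hxstarfeas.1, ?_, fun ν => Finset.prod_nonneg fun j _ => hxstarfeas.2 j⟩, rfl⟩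
      intro J hJ i
      by_cases hz : ∃ j ∈ Jᶜ, eval xstar (g j) = 0
      · obtain ⟨j, hjc, hj0⟩ := hz
        exact mul_eq_zero_of_right _ (Finset.prod_eq_zero hjc hj0)
      · push_neg at hz
        have hsub : J₀ ⊆ J := by
          intro j hj
          by_contra hjJ
          exact hz j (Finset.mem_compl.mpr hjJ) ((hJ₀mem j).mp hj)
        have hmem : (fun i => (xstar i : ℂ)) ∈
            {x : Fin n → ℂ | ∀ i, aeval x (η J i) = 0} := by
          rw [hη J hJ]
          set w : Unit ⊕ Fin m₁ ⊕ {j // j ∈ J} → ℂ := fun c =>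
            Sum.elim (fun _ => (Λ₀ : ℂ))
              (Sum.elim (fun i => (Λ (Sum.inl i) : ℂ))
                (fun j => if hj : j.1 ∈ J₀ then (Λ (Sum.inr ⟨j.1, hj⟩) : ℂ) else 0)) c with hwdef
          have hwne : w ≠ 0 := by
            intro h0
            have hin : ∀ c, w c = 0 := fun c => congrFun h0 c
            apply hΛne
            rw [Prod.mk_eq_zero]
            constructor
            · funext i
              cases i with
              | inl i =>
                  have := hin (Sum.inr (Sum.inl i))
                  simp only [hwdef, Sum.elim_inr, Sum.elim_inl] at this
                  exact_mod_cast this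
              | inr j =>
                  have := hin (Sum.inr (Sum.inr ⟨j.1, hsub j.2⟩))
                  simp only [hwdef, Sum.elim_inr] at this
                  rw [dif_pos j.2] at this
                  exact_mod_cast this
            · have := hin (Sum.inl ())
              simp only [hwdef, Sum.elim_inl] at this
              exact_mod_cast this
          have hMw : (Matrix.of fun (k : Fin n) (c : Unit ⊕ Fin m₁ ⊕ {j // j ∈ J}) =>
              Sum.elim (fun _ => aeval (fun i => (xstar i : ℂ)) (pderiv k f))
                (Sum.elim (fun i => aeval (fun i => (xstar i : ℂ)) (pderiv k (h i)))
                  (fun j => aeval (fun i => (xstar i : ℂ)) (pderiv k (g j.1)))) c).mulVec w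
              = 0 := by
            funext k
            have hk := key k
            simp only [Matrix.mulVec, dotProduct, Matrix.of_apply,
              Fintype.sum_sum_type, Sum.elim_inl, Sum.elim_inr, aeval_coe, Pi.zero_apply,
              hwdef, Fintype.sum_unique]
            have hgen : ∀ (A : Fin m₂ → ℂ) (B : ∀ j, j ∈ J₀ → ℂ),
                (∑ x : {j // j ∈ J}, A x.1 * (if hj : x.1 ∈ J₀ then B x.1 hj else 0))
                  = ∑ x : {j // j ∈ J₀}, A x.1 * B x.1 x.2 := by
              intro A B
              calc (∑ x : {j // j ∈ J}, A x.1 * (if hj : x.1 ∈ J₀ then B x.1 hj else 0))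
                  = ∑ x ∈ J, A x * (if hj : x ∈ J₀ then B x hj else 0) :=
                    Finset.sum_coe_sort J (fun x => A x * (if hj : x ∈ J₀ then B x hj else 0))
                _ = ∑ x ∈ J₀, A x * (if hj : x ∈ J₀ then B x hj else 0) :=
                    (Finset.sum_subset hsub fun x _ hx => by rw [dif_neg hx, mul_zero]).symm
                _ = ∑ x : {j // j ∈ J₀}, A x.1 * (if hj : x.1 ∈ J₀ then B x.1 hj else 0) :=
                    (Finset.sum_coe_sort J₀
                      (fun x => A x * (if hj : x ∈ J₀ then B x hj else 0))).symm
                _ = ∑ x : {j // j ∈ J₀}, A x.1 * B x.1 x.2 :=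
                    Finset.sum_congr rfl fun x _ => by rw [dif_pos x.2]
            rw [hgen (fun x => ((eval xstar (pderiv k (g x)) : ℝ) : ℂ))
                (fun x hj => ((Λ (Sum.inr ⟨x, hj⟩) : ℝ) : ℂ))]
            have e1 : (∑ x : Fin m₁, eval xstar (pderiv k (h x)) * Λ (Sum.inl x))
                = ∑ i : Fin m₁, Λ (Sum.inl i) * eval xstar (pderiv k (h i)) :=
              Finset.sum_congr rfl fun _ _ => mul_comm _ _
            have e2 : (∑ x : {j // j ∈ J₀}, eval xstar (pderiv k (g x.1)) * Λ (Sum.inr x))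
                = ∑ j : {j // j ∈ J₀}, Λ (Sum.inr j) * eval xstar (pderiv k (g j.1)) :=
              Finset.sum_congr rfl fun _ _ => mul_comm _ _
            have hk' : eval xstar (pderiv k f) * Λ₀
                + ((∑ x : Fin m₁, eval xstar (pderiv k (h x)) * Λ (Sum.inl x))
                  + ∑ x : {j // j ∈ J₀}, eval xstar (pderiv k (g x.1)) * Λ (Sum.inr x)) = 0 := by
              rw [e1, e2]; linarith
            exact_mod_cast hk'
          have hlt := rank_lt_of_mulVec_eq_zero _ _ hwne hMw
          have hcard : Fintype.card (Unit ⊕ Fin m₁ ⊕ {j // j ∈ J}) = 1 + (m₁ + J.card) := by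
            simp [Fintype.card_coe]
          simp only [Set.mem_setOf_eq]
          omega
        have h0c := hmem i
        rw [aeval_coe] at h0c
        have h0 : eval xstar (η J i) = 0 := by exact_mod_cast h0c
        rw [h0, zero_mul]
    · rintro v ⟨x, ⟨hh, _, hν⟩, rfl⟩
      exact hxstarmin x ⟨hh, fun j => by simpa using hν {j}⟩
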